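/- Fix an integer k ≥ 2. Every squarefree positive integer n has a divisor d with d ≤ n^(1/k) such that τ(n) ≤ (2·τ(d))^k. -/

import Mathlib

lemma pow_length_le_prod (p : ℕ) : ∀ T : List ℕ, (∀ x ∈ T, p ≤ x) →
    p ^ T.length ≤ T.prod := by
  intro T
  induction T with
  | nil => simp
  | cons a T ih =>
    intro h
    simp only [List.length_cons, List.prod_cons, pow_succ, mul_comm]
    exact Nat.mul_le_mul (h a (by simp)) (ih fun x hx => h x (by simp [hx]))

lemma aux_key (k : ℕ) (hk : 1 ≤ k) : ∀ N : ℕ, ∀ L : List ℕ, L.length ≤ N →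
    L.Pairwise (· ≤ ·) → L.Nodup → (∀ p ∈ L, p.Prime) →
    ∃ d : ℕ, d ∣ L.prod ∧ d ^ k ≤ L.prod ∧
      2 ^ L.length ≤ (2 * d.divisors.card) ^ k := by
  intro N
  induction N with
  | zero =>
    intro L hL _ _ _
    have hLnil : L = [] := List.length_eq_zero_iff.mp (Nat.le_zero.mp hL)
    subst hLnil
    refine ⟨1, one_dvd _, by simp, ?_⟩
    simpa using Nat.one_le_two_pow
  | succ N ih =>
    intro L hL hsort hnd hpr
    have hpos : 0 < L.prod := by
      apply List.prod_pos
      intro x hx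
      exact (hpr x hx).pos
    by_cases hlen : L.length ≤ k
    · refine ⟨1, one_dvd _, by rw [one_pow]; exact hpos, ?_⟩
      simpa using Nat.pow_le_pow_right (by norm_num) hlen
    · push_neg at hlen
      -- L nonempty
      obtain ⟨p, L', rfl⟩ : ∃ p L', L = p :: L' := by
        cases L with
        | nil => simp at hlen
        | cons a L' => exact ⟨a, L', rfl⟩
      set L := p :: L' with hLdef
      set T : List ℕ := L.take k with hT
      set R : List ℕ := L.drop k with hR
      have hTR : T ++ R = L := List.take_append_drop k L
      have hmemL : ∀ x ∈ L, p ≤ x := by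
        intro x hx
        rcases List.mem_cons.mp hx with rfl | hx'
        · exact le_refl x
        · exact (List.pairwise_cons.mp hsort).1 x hx'
      have hRsub : R.Sublist L := List.drop_sublist k L
      have hRsort : R.Pairwise (· ≤ ·) := hsort.sublist hRsub
      have hRnd : R.Nodup := hnd.sublist hRsub
      have hRpr : ∀ q ∈ R, q.Prime := fun q hq => hpr q (hRsub.mem hq)
      have hRlen : R.length = L.length - k := by simp [hR]
      have hRlt : R.length ≤ N := by
        have := hL
        omega
      obtain ⟨d', hd'dvd, hd'pow, hd'card⟩ := ih R hRlt hRsort hRnd hRpr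
      -- p not in R
      have hpnotR : p ∉ R := by
        intro hpR
        have : R.Sublist L' := by
          have : R = L'.drop (k-1) := by
            rw [hR, hLdef]
            cases k with
            | zero => omega
            | succ k' => simp
          rw [this]; exact List.drop_sublist _ _
        exact (List.nodup_cons.mp hnd).1 (this.mem hpR)
      have hpprime : p.Prime := hpr p (by simp [hLdef])
      have hpd' : ¬ p ∣ d' := by
        intro hdvd
        have hpR : p ∣ R.prod := hdvd.trans hd'dvd
        obtain ⟨q, hqR, hpq⟩ := (Prime.dvd_prod_iff hpprime.prime).mp hpR
        have : p = q := ((hRpr q hqR).eq_one_or_self_of_dvd p hpq).resolve_left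
          hpprime.ne_one
        exact hpnotR (this ▸ hqR)
      have hcop : Nat.Coprime p d' := (Nat.Prime.coprime_iff_not_dvd hpprime).mpr hpd'
      have hd'pos : 0 < d' := by
        rcases Nat.eq_zero_or_pos d' with h | h
        · subst h
          have hRp : 0 < R.prod := List.prod_pos fun x hx => (hRpr x hx).pos
          have := Nat.eq_zero_of_zero_dvd hd'dvd
          omega
        · exact h
      refine ⟨p * d', ?_, ?_, ?_⟩
      · have h1 : p ∣ T.prod := by
          apply List.dvd_prod
          rw [hT, hLdef]
          cases k with
          | zero => omega
          | succ k' => simp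
        have := mul_dvd_mul h1 hd'dvd
        rwa [← List.prod_append, hTR] at this
      · have hTlen : T.length = k := by
          rw [hT, List.length_take]
          omega
        have hTp : p ^ k ≤ T.prod := by
          have := pow_length_le_prod p T (fun x hx => hmemL x ((hTR ▸ List.mem_append_left R hx)))
          rwa [hTlen] at this
        calc (p * d') ^ k = p ^ k * d' ^ k := mul_pow p d' k
          _ ≤ T.prod * R.prod := Nat.mul_le_mul hTp hd'pow
          _ = L.prod := by rw [← List.prod_append, hTR]
      · have hcard : (p * d').divisors.card = 2 * d'.divisors.card := by
          rw [hcop.card_divisors_mul, hpprime.divisors]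
          congr 1
          rw [Finset.card_insert_of_notMem (by simp [hpprime.one_lt.ne]), Finset.card_singleton]
        rw [hcard]
        calc 2 ^ L.length = 2 ^ k * 2 ^ R.length := by
              rw [← pow_add]; congr 1; omega
          _ ≤ 2 ^ k * (2 * d'.divisors.card) ^ k :=
              Nat.mul_le_mul_left _ hd'card
          _ = (2 * (2 * d'.divisors.card)) ^ k := by rw [mul_pow, mul_pow]; ring

/-- Fix `k ≥ 2`. Every squarefree positive integer `n` has a divisor `d ≤ n^(1/k)` with
`τ(n) ≤ (2 τ(d))^k`. -/
theorem stmt1 (k : ℕ) (hk : 2 ≤ k) (n : ℕ) (hn : 0 < n) (hsq : Squarefree n) :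
    ∃ d : ℕ, d ∣ n ∧ (d : ℝ) ≤ (n : ℝ) ^ ((1 : ℝ) / k) ∧
      n.divisors.card ≤ (2 * d.divisors.card) ^ k := by
  have hprod : n.primeFactorsList.prod = n := Nat.prod_primeFactorsList hn.ne'
  obtain ⟨d, hdvd, hpow, hcard⟩ := aux_key k (by omega) n.primeFactorsList.length
    n.primeFactorsList le_rfl (Nat.primeFactorsList_sorted n).pairwise
    hsq.nodup_primeFactorsList (fun p hp => Nat.prime_of_mem_primeFactorsList hp)
  rw [hprod] at hdvd hpow
  refine ⟨d, hdvd, ?_, ?_⟩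
  · have hk0 : (0:ℝ) < k := by positivity
    have hd0 : (0:ℝ) ≤ d := by positivity
    have h1 : ((d:ℝ) ^ (k:ℕ)) ≤ (n:ℝ) := by exact_mod_cast hpow
    have h2 : (d:ℝ) = ((d:ℝ) ^ (k:ℕ)) ^ ((1:ℝ)/k) := by
      rw [← Real.rpow_natCast (d:ℝ) k, ← Real.rpow_mul hd0]
      rw [mul_one_div, div_self hk0.ne', Real.rpow_one]
    rw [h2]
    exact Real.rpow_le_rpow (by positivity) h1 (by positivity)
  · have hτ : n.divisors.card = 2 ^ n.primeFactorsList.length := by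
      have hτ2 : n.divisors.card = 2 ^ n.primeFactors.card := by
        rw [Nat.card_divisors hn.ne']
        rw [Finset.prod_congr rfl (fun p hp => ?_), Finset.prod_const]
        have h1 : n.factorization p ≤ 1 := hsq.natFactorization_le_one p
        have h2 : n.factorization p ≠ 0 := by
          rw [← Nat.support_factorization] at hp
          exact Finsupp.mem_support_iff.mp hp
        omega
      rw [hτ2, Nat.primeFactors, List.toFinset_card_of_nodup hsq.nodup_primeFactorsList]
    rw [hτ]
    exact hcard
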